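/- Under the hypotheses of the semi-discrete DG EMI scheme (coercive bounded DG bilinear form a_h with penalty excluding interface facets, Lipschitz membrane current f_Γ, lifting operator L_h with [L_h ĝ] = ĝ on Γ and ∫_{Ω_e} L_h ĝ = 0, and solution operator S_h(ĝ) = ũ_{h,ĝ} + L_h ĝ), the semi-discrete problem on the bulk — find u_h(t) ∈ V_h^k with ∫_{Ω_e} u_h = 0, C_M ∫_Γ ∂_t[u_h][v_h] + ∫_Γ f_Γ([u_h])[v_h] + a_h(u_h, v_h) = ∫_Ω f v_h for all v_h ∈ V_h^k — has a unique solution if and only if the reduced problem on the membrane — find û_h(t) ∈ V̂_h^k, C_M ∫_Γ ∂_t û_h φ̂ + ∫_Γ f_Γ(û_h) φ̂ + a_h(S_h û_h, L_h φ̂) = ∫_Ω f L_h φ̂ for all φ̂ ∈ V̂_h^k — has a unique solution; moreover the solutions are related by û_h = [u_h] and u_h = S_h û_h. -/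
import Mathlib


open scoped RealInnerProductSpace

/-- Semi-discrete DG bulk formulation of the EMI problem: `u(t) ∈ V_h^k` with zero
extracellular mean (`m (u t) = 0`) satisfying
`C_M ∫_Γ ∂_t[u_h][v_h] + ∫_Γ f_Γ([u_h])[v_h] + a_h(u_h, v_h) = ∫_Ω f v_h` for all
`v_h`, with initial jump `[u_h](0) = uhat0`.  Here `Vm` carries the `L²(Γ)` inner
product, `J` is the jump operator, `F t` is the source functional, `fΓ` the
(Nemytskii operator of the) membrane current. -/
def BulkSolution {V Vm : Type*} [AddCommGroup V] [Module ℝ V]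
    [NormedAddCommGroup Vm] [InnerProductSpace ℝ Vm]
    (CM : ℝ) (a : V →ₗ[ℝ] V →ₗ[ℝ] ℝ) (F : ℝ → V →ₗ[ℝ] ℝ) (m : V →ₗ[ℝ] ℝ)
    (J : V →ₗ[ℝ] Vm) (fΓ : Vm → Vm) (T : ℝ) (uhat0 : Vm) (u : ℝ → V) : Prop :=
  (∀ t ∈ Set.Icc (0:ℝ) T, DifferentiableAt ℝ (fun s => J (u s)) t) ∧
  J (u 0) = uhat0 ∧
  ∀ t ∈ Set.Icc (0:ℝ) T, m (u t) = 0 ∧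
    ∀ v : V, CM * ⟪deriv (fun s => J (u s)) t, J v⟫ + ⟪fΓ (J (u t)), J v⟫ +
      a (u t) v = F t v

/-- Reduced membrane formulation: `uhat(t) ∈ Vm_h^k` satisfying
`C_M ∫_Γ ∂_t uhat φ̂ + ∫_Γ f_Γ(uhat) φ̂ + a_h(S_h uhat, L_h φ̂) = ∫_Ω f L_h φ̂` for all `φ̂`,
with `uhat(0) = uhat0`; `S t` is the (time-dependent, since it involves `f`) discrete
solution operator and `L` the lifting operator. -/
def ReducedSolution {V Vm : Type*} [AddCommGroup V] [Module ℝ V]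
    [NormedAddCommGroup Vm] [InnerProductSpace ℝ Vm]
    (CM : ℝ) (a : V →ₗ[ℝ] V →ₗ[ℝ] ℝ) (F : ℝ → V →ₗ[ℝ] ℝ)
    (L : Vm →ₗ[ℝ] V) (S : ℝ → Vm → V) (fΓ : Vm → Vm) (T : ℝ) (uhat0 : Vm)
    (uhat : ℝ → Vm) : Prop :=
  (∀ t ∈ Set.Icc (0:ℝ) T, DifferentiableAt ℝ uhat t) ∧
  uhat 0 = uhat0 ∧
  ∀ t ∈ Set.Icc (0:ℝ) T, ∀ φ : Vm,
    CM * ⟪deriv uhat t, φ⟫ + ⟪fΓ (uhat t), φ⟫ + a (S t (uhat t)) (L φ) = F t (L φ)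

/-!
STATEMENT 12 (Equivalence of the bulk and membrane semi-discrete formulations).
Under the structural hypotheses on the lifting `L` (`J∘L = id`, zero extracellular
mean) and the solution operator `S` (`J (S t ghat) = ghat`, zero mean, and
`a (S t ghat) w = F t w` for all no-jump test functions `w ∈ ker J`), together with
uniqueness on the no-jump mean-zero subspace (a consequence of coercivity and the
discrete Poincaré inequality), the bulk problem has a unique solution iff the
reduced problem does, and the solutions are related by `uhat = J ∘ u`, `u = S ∘ uhat`.
-/
theorem bulk_membrane_equivalence
    {V Vm : Type*} [AddCommGroup V] [Module ℝ V]
    [NormedAddCommGroup Vm] [InnerProductSpace ℝ Vm]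
    (CM : ℝ) (hCM : 0 < CM) (T : ℝ) (hT : 0 < T)
    (a : V →ₗ[ℝ] V →ₗ[ℝ] ℝ) (F : ℝ → V →ₗ[ℝ] ℝ) (m : V →ₗ[ℝ] ℝ)
    (J : V →ₗ[ℝ] Vm) (L : Vm →ₗ[ℝ] V) (S : ℝ → Vm → V) (fΓ : Vm → Vm) (uhat0 : Vm)
    (hJL : ∀ ghat, J (L ghat) = ghat) (hmL : ∀ ghat, m (L ghat) = 0)
    (hJS : ∀ t ghat, J (S t ghat) = ghat) (hmS : ∀ t ghat, m (S t ghat) = 0)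
    (hS : ∀ t ghat, ∀ w : V, J w = 0 → a (S t ghat) w = F t w)
    -- uniqueness on the no-jump, mean-zero subspace (coercivity + discrete Poincaré)
    (huniq0 : ∀ v : V, m v = 0 → J v = 0 → (∀ w, J w = 0 → a v w = 0) → v = 0) :
    ((∃ u, BulkSolution CM a F m J fΓ T uhat0 u) ↔
        (∃ uhat, ReducedSolution CM a F L S fΓ T uhat0 uhat)) ∧
    ((∀ u₁ u₂, BulkSolution CM a F m J fΓ T uhat0 u₁ →
        BulkSolution CM a F m J fΓ T uhat0 u₂ → Set.EqOn u₁ u₂ (Set.Icc 0 T)) ↔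
      (∀ uhat₁ uhat₂, ReducedSolution CM a F L S fΓ T uhat0 uhat₁ →
        ReducedSolution CM a F L S fΓ T uhat0 uhat₂ → Set.EqOn uhat₁ uhat₂ (Set.Icc 0 T))) ∧
    (∀ u, BulkSolution CM a F m J fΓ T uhat0 u →
      ReducedSolution CM a F L S fΓ T uhat0 (fun t => J (u t))) ∧
    (∀ uhat, ReducedSolution CM a F L S fΓ T uhat0 uhat →
      BulkSolution CM a F m J fΓ T uhat0 (fun t => S t (uhat t))) := by
  -- Key fact: any bulk solution satisfies `u t = S t (J (u t))` on `[0,T]`.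
  have key : ∀ u, BulkSolution CM a F m J fΓ T uhat0 u →
      ∀ t ∈ Set.Icc (0:ℝ) T, u t = S t (J (u t)) := by
    intro u hu t ht
    obtain ⟨hd, h0, h⟩ := hu
    obtain ⟨hm, heq⟩ := h t ht
    have hv : u t - S t (J (u t)) = 0 := by
      apply huniq0
      · simp [hm, hmS]
      · simp [hJS]
      · intro w hw
        have h1 := heq w
        rw [hw] at h1
        simp only [inner_zero_right, mul_zero, add_zero, zero_add] at h1
        have h2 := hS t (J (u t)) w hw
        simp [h1, h2]
    have := sub_eq_zero.mp hv
    exact this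
  -- Forward map: bulk solution ↦ reduced solution `J ∘ u`.
  have fwd : ∀ u, BulkSolution CM a F m J fΓ T uhat0 u →
      ReducedSolution CM a F L S fΓ T uhat0 (fun t => J (u t)) := by
    intro u hu
    obtain ⟨hd, h0, h⟩ := hu
    refine ⟨hd, h0, ?_⟩
    intro t ht φ
    obtain ⟨hm, heq⟩ := h t ht
    have h1 := heq (L φ)
    rw [hJL] at h1
    have h2 := key u ⟨hd, h0, h⟩ t ht
    rw [← h2]
    exact h1
  -- Backward map: reduced solution ↦ bulk solution `S ∘ uhat`.
  have bwd : ∀ uhat, ReducedSolution CM a F L S fΓ T uhat0 uhat →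
      BulkSolution CM a F m J fΓ T uhat0 (fun t => S t (uhat t)) := by
    intro uhat hhat
    obtain ⟨hd, h0, h⟩ := hhat
    have hfun : (fun s => J (S s (uhat s))) = uhat := funext fun s => hJS s (uhat s)
    refine ⟨?_, ?_, ?_⟩
    · intro t ht; rw [hfun]; exact hd t ht
    · rw [hJS]; exact h0
    · intro t ht
      refine ⟨hmS t (uhat t), ?_⟩
      intro v
      rw [hfun, hJS]
      -- decompose v = L (J v) + (v - L (J v))
      have hw : J (v - L (J v)) = 0 := by simp [hJL]
      have h1 := h t ht (J v)
      have h2 := hS t (uhat t) (v - L (J v)) hw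
      have hdecomp : v = L (J v) + (v - L (J v)) := by abel
      calc CM * ⟪deriv uhat t, J v⟫ + ⟪fΓ (uhat t), J v⟫ + a (S t (uhat t)) v
          = (CM * ⟪deriv uhat t, J v⟫ + ⟪fΓ (uhat t), J v⟫ +
              a (S t (uhat t)) (L (J v))) + a (S t (uhat t)) (v - L (J v)) := by
            rw [show a (S t (uhat t)) v
                = a (S t (uhat t)) (L (J v)) + a (S t (uhat t)) (v - L (J v)) by
              rw [← map_add, ← hdecomp]]
            ring
        _ = F t (L (J v)) + F t (v - L (J v)) := by rw [h1, h2]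
        _ = F t v := by rw [← map_add, ← hdecomp]
  refine ⟨?_, ?_, fwd, bwd⟩
  · constructor
    · rintro ⟨u, hu⟩; exact ⟨_, fwd u hu⟩
    · rintro ⟨uhat, hhat⟩; exact ⟨_, bwd uhat hhat⟩
  · constructor
    · intro hbulk uhat₁ uhat₂ h1 h2 t ht
      have := hbulk _ _ (bwd uhat₁ h1) (bwd uhat₂ h2) ht
      have := congrArg J this
      simpa [hJS] using this
    · intro hred u₁ u₂ h1 h2 t ht
      have hJ := hred _ _ (fwd u₁ h1) (fwd u₂ h2) ht
      simp only at hJ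
      rw [key u₁ h1 t ht, key u₂ h2 t ht, hJ]
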